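/- Let K ≥ 0, Δ ≥ 0, K_R ≥ 0, and γ ∈ [0,1) with γ·K < 1. Define T(s) = K·s, T̂(s) = K·s + Δ, and R(s) = K_R·s on ℝ, and the values v(s) = Σ_{n=0}^∞ γⁿ·R(Tⁿ(s)) and v̂(s) = Σ_{n=0}^∞ γⁿ·R(T̂ⁿ(s)) (both series converge under the stated hypotheses at s = 0). Then |v(0) − v̂(0)| = γ·K_R·Δ / ((1−γ)(1−γ·K)). In particular the value-error bound of Theorem 2 is tight for linear deterministic models with linear rewards. (Claim 2, part b of the paper.) -/

import Mathlib

lemma iterate_lin_zero (K : ℝ) (n : ℕ) : (fun x : ℝ => K * x)^[n] 0 = 0 := by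
  induction n with
  | zero => simp
  | succ n ih => rw [Function.iterate_succ_apply', ih]; ring

lemma iterate_aff_zero (K Δ : ℝ) (n : ℕ) :
    (fun x : ℝ => K * x + Δ)^[n] 0 = Δ * ∑ i ∈ Finset.range n, K ^ i := by
  induction n with
  | zero => simp
  | succ n ih =>
      rw [Function.iterate_succ_apply', ih, geom_sum_succ]
      ring

/-- **Claim 2, part b.** For the linear model `T(s) = K·s`, its `Δ`-shifted
approximation `T̂(s) = K·s + Δ`, and the linear reward `R(s) = K_R·s`, the values
`v(s) = Σₙ γⁿ R(Tⁿ(s))` and `v̂(s) = Σₙ γⁿ R(T̂ⁿ(s))` satisfy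
`|v(0) − v̂(0)| = γ·K_R·Δ/((1−γ)(1−γK))`; hence the bound of Theorem 2 is tight. -/
theorem linear_model_value_error_tight
    (K Δ KR γ : ℝ) (hK : 0 ≤ K) (hΔ : 0 ≤ Δ) (hKR : 0 ≤ KR)
    (hγ0 : 0 ≤ γ) (hγ1 : γ < 1) (hγK : γ * K < 1) :
    |(∑' n : ℕ, γ ^ n * (KR * (fun x : ℝ => K * x)^[n] 0)) -
     (∑' n : ℕ, γ ^ n * (KR * (fun x : ℝ => K * x + Δ)^[n] 0))| =
      γ * KR * Δ / ((1 - γ) * (1 - γ * K)) := by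
  have h1 : (∑' n : ℕ, γ ^ n * (KR * (fun x : ℝ => K * x)^[n] 0)) = 0 := by
    simp [iterate_lin_zero]
  have hγK0 : 0 ≤ γ * K := mul_nonneg hγ0 hK
  have hγ1' : (1 : ℝ) - γ ≠ 0 := by linarith
  have hγK1' : (1 : ℝ) - γ * K ≠ 0 := by linarith
  have habsγ : |γ| < 1 := by rw [abs_of_nonneg hγ0]; exact hγ1
  have habsγK : |γ * K| < 1 := by rw [abs_of_nonneg hγK0]; exact hγK
  have h2 : (∑' n : ℕ, γ ^ n * (KR * (fun x : ℝ => K * x + Δ)^[n] 0)) =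
      γ * KR * Δ / ((1 - γ) * (1 - γ * K)) := by
    by_cases hK1 : K = 1
    · subst hK1
      have key : ∀ n : ℕ, γ ^ n * (KR * (fun x : ℝ => 1 * x + Δ)^[n] 0)
          = (KR * Δ) * ((n : ℝ) * γ ^ n) := by
        intro n
        rw [iterate_aff_zero]
        simp
        ring
      rw [tsum_congr key, tsum_mul_left, tsum_coe_mul_geometric_of_norm_lt_one habsγ]
      field_simp
    · have hK1' : K - 1 ≠ 0 := sub_ne_zero.mpr hK1
      have key : ∀ n : ℕ, γ ^ n * (KR * (fun x : ℝ => K * x + Δ)^[n] 0)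
          = (KR * Δ / (K - 1)) * (γ * K) ^ n - (KR * Δ / (K - 1)) * γ ^ n := by
        intro n
        rw [iterate_aff_zero, geom_sum_eq hK1, mul_pow]
        field_simp
      rw [tsum_congr key, Summable.tsum_sub, tsum_mul_left, tsum_mul_left,
        tsum_geometric_of_lt_one hγK0 hγK, tsum_geometric_of_lt_one hγ0 hγ1]
      · field_simp
        have h' : (1:ℝ) - K * γ ≠ 0 := by linarith
        field_simp
        ring
      · exact (summable_geometric_of_lt_one hγK0 hγK).mul_left _
      · exact (summable_geometric_of_lt_one hγ0 hγ1).mul_left _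
  rw [h1, h2, zero_sub, abs_neg, abs_of_nonneg]
  exact div_nonneg (by positivity) (le_of_lt (mul_pos (by linarith) (by linarith)))
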